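/- The function ρ : (0,∞) → ℝ, ρ(r) = r·ln r, satisfies the fourth-order system F''(r) + F'(r)/r − F(r)/r² = 0 on (0,∞), where F(r) := ρ''(r) + ρ'(r)/r − ρ(r)/r² (in fact F(r) = 2/r), but there do NOT exist constants a₁, a₂, b₁, b₂ ∈ ℝ such that r·ln r = r²·(a₁ r + a₂ r^{−1}) + (b₁ r + b₂ r^{−1}) for all r > 0; that is, r·ln r is a solution of the biharmonic ODE with m = 2, k = 1/2 that admits no Almansi decomposition ρ = r²ρ₁ + ρ₂ with ρ₁, ρ₂ solutions of the harmonic ODE ρᵢ'' + ρᵢ'/r − ρᵢ/r² = 0. -/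

import Mathlib

open Filter Topology

lemma rho_deriv : ∀ r : ℝ, 0 < r → deriv (fun r => r * Real.log r) r = Real.log r + 1 := by
  intro r hr
  have h : HasDerivAt (fun r : ℝ => r * Real.log r) (Real.log r + 1) r := by
    have : HasDerivAt (fun r : ℝ => r * Real.log r) (1 * Real.log r + r * r⁻¹) r :=
      (hasDerivAt_id r).mul (Real.hasDerivAt_log hr.ne')
    convert this using 1
    field_simp
  exact h.deriv

lemma rho_deriv2 : ∀ r : ℝ, 0 < r → deriv (deriv (fun r => r * Real.log r)) r = r⁻¹ := by
  intro r hr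
  have hev : deriv (fun r => r * Real.log r) =ᶠ[𝓝 r] fun x => Real.log x + 1 :=
    (eventually_gt_nhds hr).mono fun x hx => rho_deriv x hx
  rw [hev.deriv_eq]
  have h : HasDerivAt (fun x : ℝ => Real.log x + 1) r⁻¹ r :=
    (Real.hasDerivAt_log hr.ne').add_const 1
  exact h.deriv

lemma F_eq : ∀ r : ℝ, 0 < r →
    deriv (deriv (fun r => r * Real.log r)) r + deriv (fun r => r * Real.log r) r / r
      - (r * Real.log r) / r ^ 2 = 2 / r := by
  intro r hr
  rw [rho_deriv r hr, rho_deriv2 r hr]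
  field_simp
  ring

theorem stmt_5 :
    let ρ : ℝ → ℝ := fun r => r * Real.log r
    let F : ℝ → ℝ := fun r => deriv (deriv ρ) r + deriv ρ r / r - ρ r / r ^ 2
    (∀ r : ℝ, 0 < r → F r = 2 / r) ∧
    (∀ r : ℝ, 0 < r → deriv (deriv F) r + deriv F r / r - F r / r ^ 2 = 0) ∧
    ¬ (∃ a₁ a₂ b₁ b₂ : ℝ, ∀ r : ℝ, 0 < r →
        r * Real.log r = r ^ 2 * (a₁ * r + a₂ * r⁻¹) + (b₁ * r + b₂ * r⁻¹)) := by
  intro ρ F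
  have hF : ∀ r : ℝ, 0 < r → F r = 2 / r := fun r hr => F_eq r hr
  refine ⟨hF, ?_, ?_⟩
  · intro r hr
    have hF' : ∀ x : ℝ, 0 < x → deriv F x = 2 * -(x ^ 2)⁻¹ := by
      intro x hx
      have hev : F =ᶠ[𝓝 x] fun y => 2 * y⁻¹ := by
        filter_upwards [eventually_gt_nhds hx] with y hy
        rw [hF y hy]; rw [div_eq_mul_inv]
      rw [hev.deriv_eq]
      exact ((hasDerivAt_inv hx.ne').const_mul 2).deriv
    have hFd : deriv F r = 2 * -(r ^ 2)⁻¹ := hF' r hr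
    have hFdd : deriv (deriv F) r = 2 * -(-(2 * r) / (r ^ 2) ^ 2) := by
      have hev : deriv F =ᶠ[𝓝 r] fun y => 2 * -(y ^ 2)⁻¹ :=
        (eventually_gt_nhds hr).mono fun y hy => hF' y hy
      rw [hev.deriv_eq]
      have h2 : HasDerivAt (fun y : ℝ => (y ^ 2)⁻¹) (-(2 * r) / (r ^ 2) ^ 2) r := by
        have : HasDerivAt (fun y : ℝ => (y ^ 2)⁻¹) (-((2 : ℕ) * r ^ (2 - 1)) / (r ^ 2) ^ 2) r :=
          (hasDerivAt_pow 2 r).inv (pow_ne_zero 2 hr.ne')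
        convert this using 1
        ring
      exact ((h2.neg).const_mul 2).deriv
    rw [hFdd, hFd, hF r hr]
    field_simp
    ring
  · rintro ⟨a₁, a₂, b₁, b₂, h⟩
    have h1 := h 1 one_pos
    have h2 := h 2 (by norm_num)
    have h4 := h 4 (by norm_num)
    have h16 := h 16 (by norm_num)
    have l4 : Real.log 4 = 2 * Real.log 2 := by
      rw [show (4:ℝ) = 2 ^ 2 by norm_num, Real.log_pow]; push_cast; ring
    have l16 : Real.log 16 = 4 * Real.log 2 := by
      rw [show (16:ℝ) = 2 ^ 4 by norm_num, Real.log_pow]; push_cast; ring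
    rw [Real.log_one] at h1
    rw [l4] at h4
    rw [l16] at h16
    have hlog : 0 < Real.log 2 := Real.log_pos (by norm_num)
    norm_num at h1 h2 h4 h16
    linarith
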